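/- Let (A, B, H) be a finite-dimensional irreducible P-module that is not diffuse, i.e., there exists a nonzero vector not annihilated by all rays. Then there is d ≤ dim(H), a prime word w of length d, and φ ∈ S¹ such that (A, B, H) is unitarily equivalent to m_{w,φ} = (A_w D_φ, B_w D_φ, ℂ^d); in particular d = dim(H). -/

import Mathlib

open Filter Topology
open scoped InnerProductSpace

/-- Action of a finite binary word on a vector: digit `false` acts by `A`,
digit `true` by `B`, with the first digit acting first. -/
noncomputable def wordAct {H : Type*} [NormedAddCommGroup H] [InnerProductSpace ℂ H]
    (A B : H →L[ℂ] H) : List Bool → H → H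
  | [], ξ => ξ
  | b :: rest, ξ => wordAct A B rest ((if b then B else A) ξ)

/-- The length-`n` prefix of a ray `p : ℕ → Bool` as a list. -/
def pre (p : ℕ → Bool) (n : ℕ) : List Bool := List.ofFn fun i : Fin n => p i

/-- The Pythagorean equality `A*A + B*B = id`. -/
def IsPyth {H : Type*} [NormedAddCommGroup H] [InnerProductSpace ℂ H] [CompleteSpace H]
    (A B : H →L[ℂ] H) : Prop :=
  (ContinuousLinearMap.adjoint A).comp A + (ContinuousLinearMap.adjoint B).comp B =
    ContinuousLinearMap.id ℂ H

/-- `ξ` is a nonzero vector contained in the ray `p`. -/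
noncomputable def ContainedIn {H : Type*} [NormedAddCommGroup H] [InnerProductSpace ℂ H]
    (A B : H →L[ℂ] H) (p : ℕ → Bool) (ξ : H) : Prop :=
  ξ ≠ 0 ∧ ∀ n : ℕ, ‖wordAct A B (pre p n) ξ‖ = ‖ξ‖
/-- The partial shift matrix `A_w`: `A_w e_n = e_{n+1 mod d}` if the `n`-th digit of
`w` is `0` (i.e. `false`), else `A_w e_n = 0`. -/
def Aw (d : ℕ) (w : Fin d → Bool) : Matrix (Fin d) (Fin d) ℂ :=
  fun i j => if w j = false ∧ (i : ℕ) = ((j : ℕ) + 1) % d then 1 else 0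

/-- The partial shift matrix `B_w`: `B_w e_n = e_{n+1 mod d}` if the `n`-th digit of
`w` is `1` (i.e. `true`), else `B_w e_n = 0`. -/
def Bw (d : ℕ) (w : Fin d → Bool) : Matrix (Fin d) (Fin d) ℂ :=
  fun i j => if w j = true ∧ (i : ℕ) = ((j : ℕ) + 1) % d then 1 else 0

/-- The diagonal matrix `diag(1, …, 1, φ)`. -/
def Dmat (d : ℕ) (φ : ℂ) : Matrix (Fin d) (Fin d) ℂ :=
  Matrix.diagonal fun i => if (i : ℕ) = d - 1 then φ else 1

/-- A binary word `w` of length `d` is prime iff it is not a proper power, i.e. it is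
not invariant under the cyclic shift by `k` for any proper divisor `k` of `d`. -/
def IsPrimeWord (d : ℕ) (w : Fin d → Bool) : Prop :=
  ∀ k : ℕ, 0 < k → k < d → k ∣ d →
    ¬ ∀ i : Fin d, w ⟨((i : ℕ) + k) % d, Nat.mod_lt _ i.pos⟩ = w i

/-- The periodic ray `w^∞` obtained by repeating the word `w` of length `d`. -/
def rayOfWord (d : ℕ) (hd : 0 < d) (w : Fin d → Bool) : ℕ → Bool :=
  fun n => w ⟨n % d, Nat.mod_lt _ hd⟩

/-- Action of a finite binary word on `ℂ^d` via the matrices `A` (digit `false`) and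
`B` (digit `true`), the first digit acting first. -/
noncomputable def matAct {d : ℕ} (A B : Matrix (Fin d) (Fin d) ℂ) :
    List Bool → EuclideanSpace ℂ (Fin d) → EuclideanSpace ℂ (Fin d)
  | [], ξ => ξ
  | b :: rest, ξ => matAct A B rest (Matrix.toEuclideanLin (if b then B else A) ξ)


section Aux
variable {H : Type*} [NormedAddCommGroup H] [InnerProductSpace ℂ H]

noncomputable def wordCLM (A B : H →L[ℂ] H) : List Bool → (H →L[ℂ] H)
  | [] => ContinuousLinearMap.id ℂ H
  | b :: rest => (wordCLM A B rest).comp (if b then B else A)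

lemma wordAct_eq_wordCLM (A B : H →L[ℂ] H) : ∀ (w : List Bool) (ξ : H),
    wordAct A B w ξ = wordCLM A B w ξ
  | [], ξ => rfl
  | b :: rest, ξ => by
      simp only [wordAct, wordCLM, ContinuousLinearMap.comp_apply,
        wordAct_eq_wordCLM A B rest]

lemma wordAct_append (A B : H →L[ℂ] H) : ∀ (w w' : List Bool) (ξ : H),
    wordAct A B (w ++ w') ξ = wordAct A B w' (wordAct A B w ξ)
  | [], w', ξ => rfl
  | b :: rest, w', ξ => by
      simp only [List.cons_append, wordAct]
      exact wordAct_append A B rest w' _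

lemma pre_succ (p : ℕ → Bool) (n : ℕ) : pre p (n + 1) = pre p n ++ [p n] := by
  rw [pre, List.ofFn_succ']
  simp [pre, List.concat_eq_append]

lemma pre_add (p : ℕ → Bool) (n m : ℕ) :
    pre p (n + m) = pre p n ++ pre (fun i => p (n + i)) m := by
  simp [pre, List.ofFn_add]

lemma pyth_inner [CompleteSpace H] {A B : H →L[ℂ] H} (h : IsPyth A B) (x y : H) :
    ⟪A x, A y⟫_ℂ + ⟪B x, B y⟫_ℂ = ⟪x, y⟫_ℂ := by
  have h0 : (ContinuousLinearMap.adjoint A) (A y) + (ContinuousLinearMap.adjoint B) (B y) = y := by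
    have := congrArg (fun T : H →L[ℂ] H => T y) h
    simpa using this
  calc ⟪A x, A y⟫_ℂ + ⟪B x, B y⟫_ℂ
      = ⟪x, (ContinuousLinearMap.adjoint A) (A y)⟫_ℂ
        + ⟪x, (ContinuousLinearMap.adjoint B) (B y)⟫_ℂ := by
        rw [ContinuousLinearMap.adjoint_inner_right, ContinuousLinearMap.adjoint_inner_right]
    _ = ⟪x, y⟫_ℂ := by rw [← inner_add_right, h0]

lemma pyth_norm [CompleteSpace H] {A B : H →L[ℂ] H} (h : IsPyth A B) (x : H) :
    ‖A x‖ ^ 2 + ‖B x‖ ^ 2 = ‖x‖ ^ 2 := by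
  rw [← inner_self_eq_norm_sq (𝕜 := ℂ) x, ← inner_self_eq_norm_sq (𝕜 := ℂ) (A x),
    ← inner_self_eq_norm_sq (𝕜 := ℂ) (B x), ← map_add, pyth_inner h x x]


lemma pyth_norm_le [CompleteSpace H] {A B : H →L[ℂ] H} (h : IsPyth A B) (x : H) (b : Bool) :
    ‖(if b then B else A) x‖ ≤ ‖x‖ := by
  have h2 := pyth_norm h x
  have h3 : ‖(if b then B else A) x‖ ^ 2 ≤ ‖x‖ ^ 2 := by
    cases b <;> simp only [Bool.false_eq_true, if_true, if_false] <;>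
      nlinarith [sq_nonneg ‖A x‖, sq_nonneg ‖B x‖]
  nlinarith [norm_nonneg ((if b then B else A) x), norm_nonneg x]

/-- If the matching operator preserves the norm, the other one kills the vector. -/
lemma pyth_kill [CompleteSpace H] {A B : H →L[ℂ] H} (h : IsPyth A B) {x : H} (b : Bool)
    (hx : ‖(if b then B else A) x‖ = ‖x‖) : (if b then A else B) x = 0 := by
  have h2 := pyth_norm h x
  have h3 : ‖(if b then A else B) x‖ ^ 2 = 0 := by
    cases b <;> simp only [Bool.false_eq_true, if_true, if_false] at hx ⊢ <;>
      rw [hx] at h2 <;> linarith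
  have := pow_eq_zero_iff (n := 2) (by norm_num) |>.mp h3
  simpa [norm_eq_zero] using this

/-- If the other operator kills `x`, then `T†T x = x` for the matching operator. -/
lemma pyth_adj_fix [CompleteSpace H] {A B : H →L[ℂ] H} (h : IsPyth A B) {x : H} (b : Bool)
    (hx : (if b then A else B) x = 0) :
    (ContinuousLinearMap.adjoint (if b then B else A)) ((if b then B else A) x) = x := by
  have h0 : (ContinuousLinearMap.adjoint A) (A x) + (ContinuousLinearMap.adjoint B) (B x) = x := by
    have := congrArg (fun T : H →L[ℂ] H => T x) h
    simpa using this
  cases b <;> simp only [Bool.false_eq_true, if_true, if_false] at hx ⊢ <;>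
    (conv_rhs => rw [← h0]) <;> simp [hx]

lemma span_fix {T : H →L[ℂ] H} {s : Set H} (h : ∀ x ∈ s, T x = x) :
    ∀ x ∈ Submodule.span ℂ s, T x = x := by
  intro x hx
  have hle : Submodule.span ℂ s ≤ LinearMap.ker ((T : H →ₗ[ℂ] H) - LinearMap.id) := by
    rw [Submodule.span_le]
    intro y hy
    simp [LinearMap.mem_ker, sub_eq_zero, h y hy]
  have := hle hx
  simpa [LinearMap.mem_ker, sub_eq_zero] using this

lemma span_zero {T : H →L[ℂ] H} {s : Set H} (h : ∀ x ∈ s, T x = 0) :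
    ∀ x ∈ Submodule.span ℂ s, T x = 0 := by
  intro x hx
  have hle : Submodule.span ℂ s ≤ LinearMap.ker (T : H →ₗ[ℂ] H) := by
    rw [Submodule.span_le]
    intro y hy
    simp [LinearMap.mem_ker, h y hy]
  simpa [LinearMap.mem_ker] using hle hx

lemma span_maps {T : H →L[ℂ] H} {s t : Set H}
    (h : ∀ x ∈ s, T x ∈ Submodule.span ℂ t) :
    ∀ x ∈ Submodule.span ℂ s, T x ∈ Submodule.span ℂ t := by
  intro x hx
  have hle : Submodule.span ℂ s ≤ (Submodule.span ℂ t).comap (T : H →ₗ[ℂ] H) := by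
    rw [Submodule.span_le]; exact h
  exact hle hx

lemma isOrtho_inner {U V : Submodule ℂ H} (h : U ⟂ V) {x y : H}
    (hx : x ∈ U) (hy : y ∈ V) : ⟪x, y⟫_ℂ = 0 := (h.symm hy) x hx

lemma wordCLM_append (A B : H →L[ℂ] H) : ∀ (w w' : List Bool) (ξ : H),
    wordCLM A B (w ++ w') ξ = wordCLM A B w' (wordCLM A B w ξ) := by
  intro w w' ξ
  rw [← wordAct_eq_wordCLM, ← wordAct_eq_wordCLM, ← wordAct_eq_wordCLM, wordAct_append]

end Aux


set_option maxHeartbeats 4000000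

theorem stmt15 {H : Type*} [NormedAddCommGroup H] [InnerProductSpace ℂ H]
    [FiniteDimensional ℂ H] (A B : H →L[ℂ] H) (hAB : IsPyth A B)
    (hirr : ∀ S : Submodule ℂ H, (∀ x ∈ S, A x ∈ S ∧ B x ∈ S) → S = ⊥ ∨ S = ⊤)
    (hnotdiff : ∃ (ξ : H) (q : ℕ → Bool), ξ ≠ 0 ∧
      ¬ Tendsto (fun n : ℕ => ‖wordAct A B (pre q n) ξ‖) atTop (𝓝 0)) :
    ∃ (d : ℕ) (hd : 0 < d) (w : Fin d → Bool) (φ : ℂ),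
      IsPrimeWord d w ∧ ‖φ‖ = 1 ∧ d = Module.finrank ℂ H ∧
      ∃ U : H ≃ₗᵢ[ℂ] EuclideanSpace ℂ (Fin d),
        (∀ ξ : H, U (A ξ) = Matrix.toEuclideanLin (Aw d w * Dmat d φ) (U ξ)) ∧
        (∀ ξ : H, U (B ξ) = Matrix.toEuclideanLin (Bw d w * Dmat d φ) (U ξ)) := by
  classical
  obtain ⟨ξ0, q, hξ0, hq⟩ := hnotdiff
  set a : ℕ → ℝ := fun n => ‖wordAct A B (pre q n) ξ0‖ with ha
  have hax : ∀ n, a n = ‖wordAct A B (pre q n) ξ0‖ := fun _ => rfl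
  have hanti : Antitone a := by
    apply antitone_nat_of_succ_le
    intro n
    rw [hax, hax, pre_succ, wordAct_append]
    exact pyth_norm_le hAB _ _
  have hbdd : BddBelow (Set.range a) := ⟨0, by rintro y ⟨n, rfl⟩; positivity⟩
  have hc := tendsto_atTop_ciInf hanti hbdd
  set c : ℝ := ⨅ n, a n with hcdef
  have hc0 : 0 ≤ c := le_ciInf fun n => norm_nonneg _
  have hcpos : 0 < c := by
    rcases lt_or_eq_of_le hc0 with h | h
    · exact h
    · exact absurd (h ▸ hc) hq
  -- compactness: extract a limit vector and a limit ray
  have hs : IsCompact ((Metric.closedBall (0 : H) (a 0)) ×ˢ (Set.univ : Set (ℕ → Bool))) :=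
    (isCompact_closedBall 0 _).prod isCompact_univ
  have hmem : ∀ n : ℕ, (wordAct A B (pre q n) ξ0, fun m => q (n + m)) ∈
      (Metric.closedBall (0 : H) (a 0)) ×ˢ (Set.univ : Set (ℕ → Bool)) := by
    intro n
    refine ⟨?_, trivial⟩
    simpa [mem_closedBall_zero_iff, ← hax] using hanti (Nat.zero_le n)
  obtain ⟨⟨η, p⟩, -, nn, hmono, hlim⟩ := hs.tendsto_subseq hmem
  have hlim1 : Tendsto (fun k => wordAct A B (pre q (nn k)) ξ0) atTop (𝓝 η) :=
    (continuous_fst.tendsto (η, p)).comp hlim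
  have hlim2 : Tendsto (fun k => (fun m => q (nn k + m))) atTop (𝓝 p) :=
    (continuous_snd.tendsto (η, p)).comp hlim
  have hp : ∀ m : ℕ, ∀ᶠ k in atTop, q (nn k + m) = p m := by
    intro m
    have h1 := tendsto_pi_nhds.mp hlim2 m
    rw [nhds_discrete] at h1
    exact tendsto_pure.mp h1
  have hcont : ∀ m : ℕ, ‖wordAct A B (pre p m) η‖ = c := by
    intro m
    have h1 : Tendsto (fun k => wordCLM A B (pre p m) (wordAct A B (pre q (nn k)) ξ0)) atTop
        (𝓝 (wordCLM A B (pre p m) η)) :=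
      ((wordCLM A B (pre p m)).continuous.tendsto η).comp hlim1
    have h2 : ∀ᶠ k in atTop,
        ‖wordCLM A B (pre p m) (wordAct A B (pre q (nn k)) ξ0)‖ = a (nn k + m) := by
      have hev : ∀ᶠ k in atTop, ∀ i : Fin m, q (nn k + ↑i) = p ↑i :=
        eventually_all.mpr fun i => hp i
      filter_upwards [hev] with k hk
      have hpre : pre p m = pre (fun i => q (nn k + i)) m := by
        unfold pre; congr 1; funext i; exact (hk i).symm
      rw [hax, hpre, ← wordAct_eq_wordCLM, ← wordAct_append, ← pre_add]
    have h3 : Tendsto (fun k => a (nn k + m)) atTop (𝓝 c) :=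
      hc.comp (tendsto_atTop_mono (fun k => Nat.le_add_right _ _) hmono.tendsto_atTop)
    have h4 : Tendsto (fun k => ‖wordCLM A B (pre p m) (wordAct A B (pre q (nn k)) ξ0)‖)
        atTop (𝓝 ‖wordCLM A B (pre p m) η‖) := (continuous_norm.tendsto _).comp h1
    have h5 : Tendsto (fun k => ‖wordCLM A B (pre p m) (wordAct A B (pre q (nn k)) ξ0)‖)
        atTop (𝓝 c) := Filter.Tendsto.congr' (h2.mono fun k hk => hk.symm) h3
    rw [wordAct_eq_wordCLM]
    exact tendsto_nhds_unique h4 h5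
  have hη : ‖η‖ = c := by simpa [pre, wordAct] using hcont 0
  -- the sequence of vectors along the limit ray
  set xi : ℕ → H := fun n => wordAct A B (pre p n) η with hxidef
  have hxinorm : ∀ n, ‖xi n‖ = c := hcont
  have hxisucc : ∀ n, xi (n + 1) = (if p n then B else A) (xi n) := by
    intro n
    show wordAct A B (pre p (n + 1)) η = _
    rw [pre_succ, wordAct_append]
    rfl
  have hTnorm : ∀ n, ‖(if p n then B else A) (xi n)‖ = ‖xi n‖ := by
    intro n; rw [← hxisucc, hxinorm, hxinorm]
  have hkill : ∀ n, (if p n then A else B) (xi n) = 0 :=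
    fun n => pyth_kill hAB (p n) (hTnorm n)
  have hadjfix : ∀ n, (ContinuousLinearMap.adjoint (if p n then B else A)) (xi (n + 1)) = xi n := by
    intro n; rw [hxisucc]; exact pyth_adj_fix hAB (p n) (hkill n)
  have horth0 : ∀ n m, p n ≠ p m → ⟪xi n, xi m⟫_ℂ = 0 := by
    intro n m hne
    have hpi := pyth_inner hAB (xi n) (xi m)
    have hkn := hkill n
    have hkm := hkill m
    rw [← hpi]
    cases hn : p n <;> cases hm : p m <;> rw [hn] at hkn <;> rw [hm] at hkm <;>
      simp_all
  have horth : ∀ j n m, p (n + j) ≠ p (m + j) → ⟪xi n, xi m⟫_ℂ = 0 := by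
    intro j
    induction j with
    | zero =>
      intro n m h
      exact horth0 n m (by simpa using h)
    | succ j ih =>
      intro n m hne
      by_cases hpeq : p n = p m
      · have h0 : ⟪xi (n + 1), xi (m + 1)⟫_ℂ = 0 := by
          apply ih (n + 1) (m + 1)
          have e1 : n + 1 + j = n + (j + 1) := by omega
          have e2 : m + 1 + j = m + (j + 1) := by omega
          rw [e1, e2]; exact hne
        have hpi := pyth_inner hAB (xi n) (xi m)
        rw [← hpi]
        have hsn := hxisucc n
        have hsm := hxisucc m
        have hkn := hkill n
        have hkm := hkill m
        rw [hsn, hsm] at h0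
        cases hn : p n
        · have hm : p m = false := by rw [hn] at hpeq; exact hpeq.symm
          rw [hn] at h0 hkn; rw [hm] at h0 hkm
          simp only [Bool.false_eq_true, if_false] at h0 hkn hkm
          rw [hkn]
          simp [h0]
        · have hm : p m = true := by rw [hn] at hpeq; exact hpeq.symm
          rw [hn] at h0 hkn; rw [hm] at h0 hkm
          simp only [if_true] at h0 hkn hkm
          rw [hkn]
          simp [h0]
      · exact horth0 n m hpeq
  -- there must be a repetition: otherwise infinitely many orthogonal vectors
  have hcne : (c : ℂ) ≠ 0 := by
    simpa using (Complex.ofReal_ne_zero.mpr hcpos.ne')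
  have hple : ∃ n m : ℕ, n < m ∧ ∀ j, p (n + j) = p (m + j) := by
    by_contra hcon
    push_neg at hcon
    have horthf : Orthonormal ℂ (fun n : ℕ => ((c : ℂ))⁻¹ • xi n) := by
      rw [orthonormal_iff_ite]
      intro i j
      by_cases hij : i = j
      · subst hij
        rw [if_pos rfl, inner_smul_left, inner_smul_right, inner_self_eq_norm_sq_to_K,
          hxinorm, map_inv₀, Complex.conj_ofReal, sq]
        field_simp
        rfl
      · simp only [if_neg hij, inner_smul_left, inner_smul_right]
        rcases lt_or_gt_of_ne hij with h | h
        · obtain ⟨t, ht⟩ := hcon i j h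
          simp [horth t i j ht]
        · obtain ⟨t, ht⟩ := hcon j i h
          simp [inner_eq_zero_symm.mpr (horth t j i ht)]
    have hLI := horthf.linearIndependent
    have hcomp := hLI.comp (fun i : Fin (Module.finrank ℂ H + 1) => (i : ℕ)) Fin.val_injective
    have hcard := hcomp.fintype_card_le_finrank
    simp only [Fintype.card_fin] at hcard
    omega
  obtain ⟨n0, m0, hnm, hper0⟩ := hple
  -- restart at n0: a genuinely periodic ray
  set k : ℕ := m0 - n0 with hkdef
  set p' : ℕ → Bool := fun j => p (n0 + j) with hp'def
  set xi' : ℕ → H := fun j => xi (n0 + j) with hxi'def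
  have hxi'norm : ∀ j, ‖xi' j‖ = c := fun j => hxinorm _
  have hxi'succ : ∀ j, xi' (j + 1) = (if p' j then B else A) (xi' j) := by
    intro j
    show xi (n0 + (j + 1)) = _
    have e1 : n0 + (j + 1) = (n0 + j) + 1 := by omega
    rw [e1, hxisucc]
  have hkill' : ∀ j, (if p' j then A else B) (xi' j) = 0 := fun j => hkill (n0 + j)
  have hadjfix' : ∀ j,
      (ContinuousLinearMap.adjoint (if p' j then B else A)) (xi' (j + 1)) = xi' j := by
    intro j
    show (ContinuousLinearMap.adjoint (if p (n0 + j) then B else A)) (xi (n0 + (j + 1))) = _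
    have e1 : n0 + (j + 1) = (n0 + j) + 1 := by omega
    rw [e1, hadjfix]
  have horth' : ∀ t i j, p' (i + t) ≠ p' (j + t) → ⟪xi' i, xi' j⟫_ℂ = 0 := by
    intro t i j hne
    apply horth t (n0 + i) (n0 + j)
    have e1 : n0 + i + t = n0 + (i + t) := by omega
    have e2 : n0 + j + t = n0 + (j + t) := by omega
    rw [e1, e2]; exact hne
  have hxi'w : ∀ r l, wordAct A B (pre (fun i => p' (r + i)) l) (xi' r) = xi' (r + l) := by
    intro r l
    show wordAct A B (pre (fun i => p' (r + i)) l) (wordAct A B (pre p (n0 + r)) η) = xi (n0 + (r + l))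
    rw [← wordAct_append]
    have e1 : (fun i => p' (r + i)) = (fun i => p (n0 + r + i)) := by
      funext i
      show p (n0 + (r + i)) = p (n0 + r + i)
      congr 1
      omega
    rw [e1, ← pre_add]
    have e2 : n0 + (r + l) = n0 + r + l := by omega
    rw [e2]
  have hper' : ∀ j, p' (j + k) = p' j := by
    intro j
    have e1 : n0 + (j + k) = m0 + j := by omega
    show p (n0 + (j + k)) = p (n0 + j)
    rw [e1, ← hper0 j]
  have hkpos : 0 < k := by omega
  -- the minimal period e
  have hex : ∃ t, 0 < t ∧ ∀ j, p' (j + t) = p' j := ⟨k, hkpos, hper'⟩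
  set e : ℕ := Nat.find hex with hedef
  obtain ⟨hepos, hper⟩ := Nat.find_spec hex
  have hmin : ∀ t, t < e → ¬(0 < t ∧ ∀ j, p' (j + t) = p' j) := fun t ht => Nat.find_min hex ht
  have hp'mod : ∀ r j, p' (r + j * e) = p' r := by
    intro r j
    induction j with
    | zero => simp
    | succ j ih =>
      have e1 : r + (j + 1) * e = (r + j * e) + e := by ring
      rw [e1, hper, ih]
  have hp'mod' : ∀ t, p' t = p' (t % e) := by
    intro t
    conv_lhs => rw [← Nat.mod_add_div' t e]
    exact hp'mod (t % e) (t / e)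
  have hres : ∀ r s, r < s → s < e → ∃ t, p' (r + t) ≠ p' (s + t) := by
    intro r s hrs hse
    by_contra hcon
    push_neg at hcon
    refine hmin (s - r) (by omega) ⟨by omega, fun t => ?_⟩
    by_cases hrt : r ≤ t
    · have e1 : t + (s - r) = s + (t - r) := by omega
      have e2 : t = r + (t - r) := by omega
      rw [e1]
      conv_rhs => rw [e2]
      exact (hcon (t - r)).symm
    · -- t < r : go up by e first
      have e1 : t + (s - r) + e = s + (t + e - r) := by omega
      have e2 : t + e = r + (t + e - r) := by omega
      calc p' (t + (s - r)) = p' (t + (s - r) + e) := (hper _).symm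
        _ = p' (s + (t + e - r)) := by rw [e1]
        _ = p' (r + (t + e - r)) := (hcon _).symm
        _ = p' (t + e) := by rw [← e2]
        _ = p' t := hper t
  -- the orthogonal submodules M r and the one-period operator C
  have hxi'e : ∀ r j, xi' (r + j * e + 1) = (if p' r then B else A) (xi' (r + j * e)) := by
    intro r j
    rw [hxi'succ (r + j * e), hp'mod r j]
  have hkill'e : ∀ r j, (if p' r then A else B) (xi' (r + j * e)) = 0 := by
    intro r j
    rw [← hp'mod r j]
    exact hkill' (r + j * e)
  have hadjfix'e : ∀ r j,
      (ContinuousLinearMap.adjoint (if p' r then B else A)) (xi' (r + j * e + 1))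
        = xi' (r + j * e) := by
    intro r j
    rw [← hp'mod r j]
    exact hadjfix' (r + j * e)
  set M : ℕ → Submodule ℂ H :=
    fun r => Submodule.span ℂ (Set.range fun j : ℕ => xi' (r + j * e)) with hMdef
  have hMgen : ∀ r j, xi' (r + j * e) ∈ M r := fun r j => Submodule.subset_span ⟨j, rfl⟩
  have hMmap : ∀ r, ∀ x ∈ M r, (if p' r then B else A) x ∈ M (r + 1) := by
    intro r
    apply span_maps
    rintro x ⟨j, rfl⟩
    rw [← hxi'e r j]
    have e1 : r + j * e + 1 = (r + 1) + j * e := by omega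
    rw [e1]
    exact hMgen (r + 1) j
  have hMkill : ∀ r, ∀ x ∈ M r, (if p' r then A else B) x = 0 := by
    intro r
    apply span_zero
    rintro x ⟨j, rfl⟩
    exact hkill'e r j
  have hMfix : ∀ r, ∀ x ∈ M r,
      (ContinuousLinearMap.adjoint (if p' r then B else A)) ((if p' r then B else A) x) = x := by
    intro r
    have := span_fix (T := (ContinuousLinearMap.adjoint (if p' r then B else A)).comp
        (if p' r then B else A)) (s := Set.range fun j : ℕ => xi' (r + j * e)) ?_
    · intro x hx
      exact this x hx
    · rintro x ⟨j, rfl⟩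
      show (ContinuousLinearMap.adjoint (if p' r then B else A))
        ((if p' r then B else A) (xi' (r + j * e))) = _
      rw [← hxi'e r j]
      exact hadjfix'e r j
  have hMnorm : ∀ r, ∀ x ∈ M r, ‖(if p' r then B else A) x‖ = ‖x‖ := by
    intro r x hx
    have h1 : ⟪(if p' r then B else A) x, (if p' r then B else A) x⟫_ℂ = ⟪x, x⟫_ℂ := by
      rw [← ContinuousLinearMap.adjoint_inner_left, hMfix r x hx]
    have h2 : ‖(if p' r then B else A) x‖ ^ 2 = ‖x‖ ^ 2 := by
      rw [← inner_self_eq_norm_sq (𝕜 := ℂ), ← inner_self_eq_norm_sq (𝕜 := ℂ), h1]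
    nlinarith [norm_nonneg ((if p' r then B else A) x), norm_nonneg x]
  have hMorth : ∀ r s, r < s → s < e → M r ⟂ M s := by
    intro r s hrs hse
    rw [hMdef]
    rw [Submodule.isOrtho_span]
    rintro x ⟨i, rfl⟩ y ⟨j, rfl⟩
    obtain ⟨t, ht⟩ := hres r s hrs hse
    apply horth' t
    have e1 : r + i * e + t = (r + t) + i * e := by omega
    have e2 : s + j * e + t = (s + t) + j * e := by omega
    rw [e1, e2, hp'mod (r + t) i, hp'mod (s + t) j]
    exact ht
  -- the one-period word operator C and its adjoint telescoping
  set C : H →L[ℂ] H := wordCLM A B (pre p' e) with hCdef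
  have hpre_shift : ∀ r, (∀ i, p' (r + i) = p' i) →
      pre (fun i => p' (r + i)) e = pre p' e := by
    intro r hr
    unfold pre; congr 1; funext i; exact hr i
  have hshift_mul : ∀ j i, p' (j * e + i) = p' i := by
    intro j i
    have e1 : j * e + i = i + j * e := by omega
    rw [e1, hp'mod i j]
  have hCgen : ∀ j, C (xi' (j * e)) = xi' ((j + 1) * e) := by
    intro j
    rw [hCdef, ← wordAct_eq_wordCLM, ← hpre_shift (j * e) (hshift_mul j)]
    have := hxi'w (j * e) e
    rw [this]
    congr 1
    ring
  have hCM : ∀ x ∈ M 0, C x ∈ M 0 := by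
    apply span_maps
    rintro x ⟨j, rfl⟩
    show C (xi' (0 + j * e)) ∈ M 0
    have e1 : (0 : ℕ) + j * e = j * e := by omega
    rw [e1, hCgen j]
    have e2 : (j + 1) * e = 0 + (j + 1) * e := by omega
    rw [e2]
    exact hMgen 0 (j + 1)
  have hadjW : ∀ l r, (ContinuousLinearMap.adjoint (wordCLM A B (pre (fun i => p' (r + i)) l)))
      (xi' (r + l)) = xi' r := by
    intro l
    induction l with
    | zero =>
      intro r
      show (ContinuousLinearMap.adjoint (wordCLM A B (pre (fun i => p' (r + i)) 0))) (xi' (r + 0)) = xi' r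
      have : pre (fun i => p' (r + i)) 0 = [] := rfl
      rw [this]
      show (ContinuousLinearMap.adjoint (ContinuousLinearMap.id ℂ H)) (xi' (r + 0)) = xi' r
      rw [ContinuousLinearMap.adjoint_id]
      rfl
    | succ l ih =>
      intro r
      rw [pre_succ]
      have hsplit : wordCLM A B (pre (fun i => p' (r + i)) l ++ [p' (r + l)]) =
          (wordCLM A B [p' (r + l)]).comp (wordCLM A B (pre (fun i => p' (r + i)) l)) := by
        apply ContinuousLinearMap.ext
        intro x
        simp [wordCLM_append]
      rw [hsplit, ContinuousLinearMap.adjoint_comp]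
      have hone : wordCLM A B [p' (r + l)] = (if p' (r + l) then B else A) := by
        apply ContinuousLinearMap.ext
        intro x
        show wordCLM A B [p' (r + l)] x = _
        rw [← wordAct_eq_wordCLM]
        rfl
      rw [hone]
      show (ContinuousLinearMap.adjoint (wordCLM A B (pre (fun i => p' (r + i)) l)))
        ((ContinuousLinearMap.adjoint (if p' (r + l) then B else A)) (xi' (r + (l + 1)))) = xi' r
      have e1 : r + (l + 1) = (r + l) + 1 := by omega
      rw [e1, hadjfix' (r + l)]
      exact ih r
  have hCfix : ∀ x ∈ M 0, (ContinuousLinearMap.adjoint C) (C x) = x := by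
    have := span_fix (T := (ContinuousLinearMap.adjoint C).comp C)
        (s := Set.range fun j : ℕ => xi' (0 + j * e)) ?_
    · intro x hx
      exact this x hx
    · rintro x ⟨j, rfl⟩
      show (ContinuousLinearMap.adjoint C) (C (xi' (0 + j * e))) = xi' (0 + j * e)
      have e1 : (0 : ℕ) + j * e = j * e := by omega
      rw [e1, hCgen j]
      rw [hCdef, ← hpre_shift (j * e) (hshift_mul j)]
      have e2 : (j + 1) * e = j * e + e := by ring
      rw [e2]
      exact hadjW e (j * e)
  -- eigenvector of C on M 0
  have hxi'0 : xi' 0 ∈ M 0 := by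
    have := hMgen 0 0
    simpa using this
  have hxi'0ne : xi' 0 ≠ 0 := by
    intro hcon
    have := hxi'norm 0
    rw [hcon, norm_zero] at this
    exact hcpos.ne this
  have : Nontrivial ↥(M 0) := by
    refine nontrivial_of_ne ⟨xi' 0, hxi'0⟩ 0 ?_
    intro hcon
    exact hxi'0ne (by simpa using congrArg Subtype.val hcon)
  obtain ⟨μ, hμ⟩ := Module.End.exists_eigenvalue
    ((C : H →ₗ[ℂ] H).restrict (fun x hx => hCM x hx))
  obtain ⟨v, hv⟩ := hμ.exists_hasEigenvector
  have hCv : C ↑v = μ • (↑v : H) := by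
    have := congrArg Subtype.val hv.apply_eq_smul
    simpa [LinearMap.restrict_apply] using this
  have hvne : (↑v : H) ≠ 0 := fun hc => hv.right (Submodule.coe_eq_zero.mp hc)
  have hinnervne : ⟪(↑v : H), ↑v⟫_ℂ ≠ 0 := fun hc => hvne (inner_self_eq_zero.mp hc)
  have hμ1 : ‖μ‖ = 1 := by
    have h1 : ⟪C (↑v : H), C ↑v⟫_ℂ = ⟪(↑v : H), ↑v⟫_ℂ := by
      rw [← ContinuousLinearMap.adjoint_inner_left, hCfix ↑v v.2]
    rw [hCv, inner_smul_left, inner_smul_right, ← mul_assoc] at h1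
    have h2 : (starRingEnd ℂ) μ * μ = 1 := by
      have := mul_right_cancel₀ hinnervne (h1.trans (one_mul ⟪(↑v : H), ↑v⟫_ℂ).symm)
      exact this
    rw [mul_comm, Complex.mul_conj] at h2
    have h4 : Complex.normSq μ = 1 := by exact_mod_cast h2
    have h5 : ‖μ‖ ^ 2 = 1 := by rw [Complex.sq_norm]; exact h4
    nlinarith [norm_nonneg μ]
  -- the cyclic orbit of the eigenvector
  set vseq : ℕ → H := fun r => wordAct A B (pre p' r) (↑v : H) with hvseqdef
  have hvseq0 : vseq 0 = (↑v : H) := rfl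
  have hvseqsucc : ∀ r, vseq (r + 1) = (if p' r then B else A) (vseq r) := by
    intro r
    show wordAct A B (pre p' (r + 1)) (↑v : H) = _
    rw [pre_succ, wordAct_append]
    rfl
  have hvmem : ∀ r, vseq r ∈ M r := by
    intro r
    induction r with
    | zero => exact v.2
    | succ r ih =>
      rw [hvseqsucc]
      exact hMmap r _ ih
  have hvnorm : ∀ r, ‖vseq r‖ = ‖(↑v : H)‖ := by
    intro r
    induction r with
    | zero => rfl
    | succ r ih =>
      rw [hvseqsucc, hMnorm r _ (hvmem r), ih]
  have hvkill : ∀ r, (if p' r then A else B) (vseq r) = 0 := fun r => hMkill r _ (hvmem r)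
  have hvseq_e : vseq e = μ • (↑v : H) := by
    show wordAct A B (pre p' e) (↑v : H) = _
    rw [wordAct_eq_wordCLM]
    exact hCv
  -- the invariant subspace spanned by one period of the orbit
  set N : Submodule ℂ H := Submodule.span ℂ (Set.range fun r : Fin e => vseq ↑r) with hNdef
  have hNgen : ∀ r : Fin e, vseq ↑r ∈ N := fun r => Submodule.subset_span ⟨r, rfl⟩
  have hsucc_mem : ∀ r : Fin e, vseq (↑r + 1) ∈ N := by
    intro r
    by_cases hlt : (↑r : ℕ) + 1 < e
    · exact hNgen ⟨↑r + 1, hlt⟩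
    · have hr2 := r.2
      have he1 : (↑r : ℕ) + 1 = e := by omega
      rw [he1, hvseq_e]
      exact N.smul_mem μ (hNgen ⟨0, hepos⟩)
  have hAinv : ∀ x ∈ N, A x ∈ N := by
    apply span_maps
    rintro x ⟨r, rfl⟩
    show A (vseq ↑r) ∈ N
    cases hpr : p' ↑r with
    | false =>
      have h1 := hvseqsucc ↑r
      rw [hpr] at h1
      simp only [Bool.false_eq_true, if_false] at h1
      rw [← h1]
      exact hsucc_mem r
    | true =>
      have h1 := hvkill ↑r
      rw [hpr] at h1
      simp only [if_true] at h1
      rw [h1]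
      exact N.zero_mem
  have hBinv : ∀ x ∈ N, B x ∈ N := by
    apply span_maps
    rintro x ⟨r, rfl⟩
    show B (vseq ↑r) ∈ N
    cases hpr : p' ↑r with
    | true =>
      have h1 := hvseqsucc ↑r
      rw [hpr] at h1
      simp only [if_true] at h1
      rw [← h1]
      exact hsucc_mem r
    | false =>
      have h1 := hvkill ↑r
      rw [hpr] at h1
      simp only [Bool.false_eq_true, if_false] at h1
      rw [h1]
      exact N.zero_mem
  have hNtop : N = ⊤ := by
    rcases hirr N (fun x hx => ⟨hAinv x hx, hBinv x hx⟩) with hbot | htop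
    · exfalso
      have h0 : vseq 0 ∈ N := hNgen ⟨0, hepos⟩
      rw [hbot, Submodule.mem_bot] at h0
      exact hvne h0
    · exact htop
  -- the orthonormal basis
  have hcv : ((‖(↑v : H)‖ : ℝ) : ℂ) ≠ 0 := by
    simp [norm_eq_zero, hvne]
  set u : Fin e → H := fun r => ((‖(↑v : H)‖ : ℂ))⁻¹ • vseq ↑r with hudef
  have hvseq_u : ∀ r : Fin e, vseq ↑r = ((‖(↑v : H)‖ : ℂ)) • u r := by
    intro r
    show vseq ↑r = ((‖(↑v : H)‖ : ℂ)) • (((‖(↑v : H)‖ : ℂ))⁻¹ • vseq ↑r)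
    rw [smul_inv_smul₀ hcv]
  have hu_orth : Orthonormal ℂ u := by
    rw [orthonormal_iff_ite]
    intro i j
    by_cases hij : i = j
    · subst hij
      rw [if_pos rfl]
      show ⟪((‖(↑v : H)‖ : ℂ))⁻¹ • vseq ↑i, ((‖(↑v : H)‖ : ℂ))⁻¹ • vseq ↑i⟫_ℂ = 1
      rw [inner_smul_left, inner_smul_right, inner_self_eq_norm_sq_to_K, hvnorm, map_inv₀,
        Complex.conj_ofReal, sq]
      field_simp
      rfl
    · rw [if_neg hij]
      show ⟪((‖(↑v : H)‖ : ℂ))⁻¹ • vseq ↑i, ((‖(↑v : H)‖ : ℂ))⁻¹ • vseq ↑j⟫_ℂ = 0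
      rw [inner_smul_left, inner_smul_right]
      have hvij : ⟪vseq ↑i, vseq ↑j⟫_ℂ = 0 := by
        have hne : (↑i : ℕ) ≠ ↑j := fun hc => hij (Fin.ext hc)
        rcases lt_or_gt_of_ne hne with h | h
        · exact isOrtho_inner (hMorth ↑i ↑j h j.2) (hvmem ↑i) (hvmem ↑j)
        · exact inner_eq_zero_symm.mpr
            (isOrtho_inner (hMorth ↑j ↑i h i.2) (hvmem ↑j) (hvmem ↑i))
      rw [hvij, mul_zero, mul_zero]
  have hu_span : ⊤ ≤ Submodule.span ℂ (Set.range u) := by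
    have hle : N ≤ Submodule.span ℂ (Set.range u) := by
      rw [hNdef, Submodule.span_le]
      rintro x ⟨r, rfl⟩
      show vseq ↑r ∈ Submodule.span ℂ (Set.range u)
      rw [hvseq_u r]
      exact Submodule.smul_mem _ _ (Submodule.subset_span ⟨r, rfl⟩)
    rw [← hNtop]
    exact hle
  set b : OrthonormalBasis (Fin e) ℂ H := OrthonormalBasis.mk hu_orth hu_span with hbdef
  have hb : ∀ i : Fin e, b i = u i := fun i =>
    congrFun (OrthonormalBasis.coe_mk hu_orth hu_span) i
  have hdim : e = Module.finrank ℂ H := by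
    have := Module.finrank_eq_card_basis b.toBasis
    rw [Fintype.card_fin] at this
    exact this.symm
  -- prime word
  have hprime : IsPrimeWord e (fun i : Fin e => p' ↑i) := by
    intro k' hk0 hk1 _ hinv
    apply hmin k' hk1
    refine ⟨hk0, fun j => ?_⟩
    have h3 := hinv ⟨j % e, Nat.mod_lt _ hepos⟩
    have h2 : (j + k') % e = (j % e + k') % e := by
      conv_lhs => rw [Nat.add_mod]
      conv_rhs => rw [Nat.add_mod, Nat.mod_mod_of_dvd j (dvd_refl e)]
    calc p' (j + k') = p' ((j + k') % e) := hp'mod' _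
      _ = p' ((j % e + k') % e) := by rw [h2]
      _ = p' (j % e) := h3
      _ = p' j := (hp'mod' j).symm
  -- the key computation of the matrix of T in the basis b
  have hkey : ∀ (T : H →L[ℂ] H) (bb : Bool),
      (∀ r : ℕ, p' r = bb → T (vseq r) = vseq (r + 1)) →
      (∀ r : ℕ, p' r ≠ bb → T (vseq r) = 0) →
      ∀ ξ : H, b.repr (T ξ) = Matrix.toEuclideanLin
        ((Matrix.of fun i j : Fin e =>
            if p' ↑j = bb ∧ (i : ℕ) = ((j : ℕ) + 1) % e then (1 : ℂ) else 0)
          * Dmat e μ) (b.repr ξ) := by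
    intro T bb hgood hbad ξ
    set G : Matrix (Fin e) (Fin e) ℂ :=
      (Matrix.of fun i j : Fin e =>
          if p' ↑j = bb ∧ (i : ℕ) = ((j : ℕ) + 1) % e then (1 : ℂ) else 0)
        * Dmat e μ with hGdef
    have hGcol : ∀ i r : Fin e, G r i =
        (if p' ↑i = bb ∧ (r : ℕ) = ((i : ℕ) + 1) % e then (1 : ℂ) else 0)
          * (if (i : ℕ) = e - 1 then μ else 1) := by
      intro i r
      simp only [hGdef, Dmat]
      rw [Matrix.mul_diagonal]
      rfl
    have hrep : ∀ i : Fin e, b.repr (u i) = EuclideanSpace.single i 1 := by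
      intro i
      rw [← hb i]
      exact b.repr_self i
    have hRHS : ∀ i : Fin e, Matrix.toEuclideanLin G (EuclideanSpace.single i 1) =
        (WithLp.equiv 2 (Fin e → ℂ)).symm (fun r => G r i) := by
      intro i
      rw [Matrix.toEuclideanLin_apply, PiLp.ofLp_single, WithLp.equiv_symm_apply]
      congr 1
      rw [Matrix.mulVec_single]
      funext r
      simp
    have hext : (b.repr.toLinearEquiv.toLinearMap.comp (T : H →ₗ[ℂ] H)) =
        ((Matrix.toEuclideanLin G).comp b.repr.toLinearEquiv.toLinearMap) := by
      apply Module.Basis.ext b.toBasis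
      intro i
      have hbi : b.toBasis i = b i := congrFun (OrthonormalBasis.coe_toBasis b) i
      simp only [LinearMap.comp_apply, hbi, hb i]
      show b.repr (T (u i)) = Matrix.toEuclideanLin G (b.repr (u i))
      rw [hrep i, hRHS i]
      by_cases hmatch : p' ↑i = bb
      · have hTv : T (vseq ↑i) = vseq (↑i + 1) := hgood ↑i hmatch
        by_cases hlt : (↑i : ℕ) + 1 < e
        · -- interior step
          have hLHS : b.repr (T (u i)) = EuclideanSpace.single ⟨↑i + 1, hlt⟩ 1 := by
            show b.repr (T (((‖(↑v : H)‖ : ℂ))⁻¹ • vseq ↑i)) = _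
            rw [map_smul, hTv,
              show vseq ((i : ℕ) + 1) = ((‖(↑v : H)‖ : ℂ)) • u ⟨↑i + 1, hlt⟩ from
                hvseq_u ⟨↑i + 1, hlt⟩,
              map_smul, map_smul, smul_smul, inv_mul_cancel₀ hcv, one_smul, hrep]
          rw [hLHS]
          ext r
          rw [EuclideanSpace.single_apply]
          show _ = G r i
          rw [hGcol]
          have hie : ¬ ((i : ℕ) = e - 1) := by omega
          have hmod : ((i : ℕ) + 1) % e = (i : ℕ) + 1 := Nat.mod_eq_of_lt hlt
          simp only [hmatch, hmod, hie, if_false, if_true, true_and, mul_one, Fin.ext_iff]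
        · -- wrap-around step
          have hr2 := i.2
          have he1 : (↑i : ℕ) + 1 = e := by omega
          have hu0 : u ⟨0, hepos⟩ = ((‖(↑v : H)‖ : ℂ))⁻¹ • (↑v : H) := by
            show ((‖(↑v : H)‖ : ℂ))⁻¹ • vseq 0 = _
            rw [hvseq0]
          have hstep : T (u i) = μ • u ⟨0, hepos⟩ := by
            show T (((‖(↑v : H)‖ : ℂ))⁻¹ • vseq ↑i) = _
            rw [map_smul, hTv, he1, hvseq_e, hu0, smul_comm]
          have hLHS : b.repr (T (u i)) = μ • EuclideanSpace.single ⟨0, hepos⟩ 1 := by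
            rw [hstep, map_smul, hrep]
          rw [hLHS]
          ext r
          rw [PiLp.smul_apply, EuclideanSpace.single_apply]
          show _ = G r i
          rw [hGcol]
          have hie : (i : ℕ) = e - 1 := by omega
          have hmod : ((i : ℕ) + 1) % e = 0 := by rw [he1]; exact Nat.mod_self e
          have h9 : (e - 1 + 1) % e = 0 := by
            have h10 : e - 1 + 1 = e := by omega
            rw [h10, Nat.mod_self]
          have hm2 : p' (e - 1) = bb := by rw [← hie]; exact hmatch
          simp only [hmatch, hmod, hie, if_true, true_and, Fin.ext_iff, smul_eq_mul, h9]
          by_cases hr : (r : ℕ) = 0 <;> simp [hr, hm2]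
      · -- the operator kills this basis vector
        have hLHS : b.repr (T (u i)) = 0 := by
          show b.repr (T (((‖(↑v : H)‖ : ℂ))⁻¹ • vseq ↑i)) = _
          rw [map_smul, hbad ↑i hmatch, smul_zero, map_zero]
        rw [hLHS]
        ext r
        show _ = G r i
        rw [hGcol]
        simp [hmatch]
    have := congrArg (fun (L : H →ₗ[ℂ] EuclideanSpace ℂ (Fin e)) => L ξ) hext
    simpa using this
  -- conclude
  refine ⟨e, hepos, (fun i : Fin e => p' ↑i), μ, hprime, hμ1, hdim, b.repr, ?_, ?_⟩
  · intro ξ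
    have hgood : ∀ r : ℕ, p' r = false → A (vseq r) = vseq (r + 1) := by
      intro r hr
      rw [hvseqsucc r, hr]
      simp
    have hbad : ∀ r : ℕ, p' r ≠ false → A (vseq r) = 0 := by
      intro r hr
      have hr' : p' r = true := by simpa using hr
      have h1 := hvkill r
      rw [hr'] at h1
      simpa using h1
    exact hkey A false hgood hbad ξ
  · intro ξ
    have hgood : ∀ r : ℕ, p' r = true → B (vseq r) = vseq (r + 1) := by
      intro r hr
      rw [hvseqsucc r, hr]
      simp
    have hbad : ∀ r : ℕ, p' r ≠ true → B (vseq r) = 0 := by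
      intro r hr
      have hr' : p' r = false := by simpa using hr
      have h1 := hvkill r
      rw [hr'] at h1
      simpa using h1
    exact hkey B true hgood hbad ξ
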